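/- Define, for integers N ≥ k+1 ≥ 2, the rational number a_{(k)}^{(N)} = (∏_{i=1}^{k} (N−i)/(2N−2i−1)) · r_{(k)}(N−k). Then for every integer N ≥ 2: (i) a_{(1)}^{(N)} = (N−1)/(2N−3), and (ii) a_{(N−1)}^{(N)} = (−1)^{N−1}·((N−1)/(2N−3))·(2N−5). -/

import Mathlib

open Polynomial

/-- The defining interpolation conditions of the polynomial `r_{(k)}` (`k ≥ 1`):
degree `≤ 2k−1`, zeros at `−1, …, −(k−1)`, and value
`(−2)^{−(k−1)}·(1/2)_{k−1}/(k−1)!` at the points `1/2 − i` for `i = 0, 1, …, k`. -/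
def rCond (k : ℕ) (p : Polynomial ℚ) : Prop :=
  p.natDegree ≤ 2 * k - 1 ∧
  (∀ i : ℕ, 1 ≤ i → i ≤ k - 1 → p.eval (-(i : ℚ)) = 0) ∧
  (∀ i : ℕ, i ≤ k →
    p.eval (1 / 2 - (i : ℚ))
      = (-2 : ℚ) ^ (-((k : ℤ) - 1)) * (ascPochhammer ℚ (k - 1)).eval (1 / 2)
          / ((k - 1).factorial : ℚ))

/-- The coefficient `a_{(k)}^{(N)} = (∏_{i=1}^{k} (N−i)/(2N−2i−1))·r_{(k)}(N−k)`,
expressed via any polynomial `p` satisfying the interpolation conditions of `r_{(k)}`. -/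
def aCoeff (k N : ℕ) (p : Polynomial ℚ) : ℚ :=
  (∏ i ∈ Finset.Icc 1 k, ((N : ℚ) - (i : ℚ)) / (2 * (N : ℚ) - 2 * (i : ℚ) - 1))
    * p.eval ((N : ℚ) - (k : ℚ))


private def Dq (m : ℕ) : ℚ := ∏ t ∈ Finset.range m, (2 * (t:ℚ) + 1)

private lemma Dq_succ (m : ℕ) : Dq (m+1) = Dq m * (2*(m:ℚ)+1) := Finset.prod_range_succ _ _

private lemma Dq_pos (m : ℕ) : 0 < Dq m := Finset.prod_pos (fun t _ => by positivity)

private lemma Dq_ne (m : ℕ) : Dq m ≠ 0 := (Dq_pos m).ne'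

private lemma Dq_mul_fact (m : ℕ) :
    Dq m * (2^m * (Nat.factorial m : ℚ)) = ((Nat.factorial (2*m) : ℚ)) := by
  induction m with
  | zero => simp [Dq]
  | succ m ih =>
    have h2 : Nat.factorial (2*(m+1)) = (2*m+2)*((2*m+1)*Nat.factorial (2*m)) := by
      rw [show 2*(m+1) = (2*m+1)+1 by ring, Nat.factorial_succ, show 2*m+1 = (2*m)+1 from rfl,
        Nat.factorial_succ]
    rw [Dq_succ]
    push_cast [h2, Nat.factorial_succ]
    push_cast at ih
    linear_combination (2*(m:ℚ)+2)*(2*(m:ℚ)+1)*ih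

private lemma Dq_eq (m : ℕ) : Dq m = ((Nat.factorial (2*m) : ℚ)) / (2^m * (Nat.factorial m : ℚ)) := by
  rw [eq_div_iff (by positivity)]; exact Dq_mul_fact m

private lemma prod_half (n : ℕ) : ∏ t ∈ Finset.range n, ((t:ℚ) + 1/2) = Dq n / 2^n := by
  have : ∀ t ∈ Finset.range n, ((t:ℚ) + 1/2) = (2*(t:ℚ)+1) / 2 := by intro t _; ring
  rw [Finset.prod_congr rfl this, Finset.prod_div_distrib, Finset.prod_const, Finset.card_range]
  rfl

private lemma prod_nat_cast_fact (n : ℕ) :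
    ∏ t ∈ Finset.range n, ((t:ℚ) + 1) = (Nat.factorial n : ℚ) := by
  rw [← Finset.prod_range_add_one_eq_factorial n]
  push_cast; rfl

private lemma sum_range_two_mul {M : Type*} [AddCommMonoid M] (f : ℕ → M) (n : ℕ) :
    ∑ j ∈ Finset.range (2*n), f j
      = ∑ i ∈ Finset.range n, f (2*i) + ∑ i ∈ Finset.range n, f (2*i+1) := by
  induction n with
  | zero => simp
  | succ n ih =>
    rw [show 2*(n+1) = (2*n)+1+1 by ring, Finset.sum_range_succ, Finset.sum_range_succ,
      ih, Finset.sum_range_succ, Finset.sum_range_succ]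
    abel

private lemma neg_one_pow_two_mul (i : ℕ) : ((-1:ℤ))^(2*i) = 1 := Even.neg_one_pow ⟨i, by ring⟩
private lemma neg_one_pow_two_mul_add_one (i : ℕ) : ((-1:ℤ))^(2*i+1) = -1 :=
  Odd.neg_one_pow ⟨i, by ring⟩

-- odd entries of row 2m+3
private lemma sum_odd_choose (m : ℕ) :
    ∑ j ∈ Finset.range (m+2), ((2*m+3).choose (2*j+1)) = 2^(2*m+2) := by
  have h1 : ∑ j ∈ Finset.range (2*(m+2)), ((2*m+3).choose j) = 2^(2*m+3) := by
    rw [show 2*(m+2) = (2*m+3)+1 by ring]; exact Nat.sum_range_choose _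
  have h2 : ∑ j ∈ Finset.range (2*(m+2)), ((-1:ℤ))^j * ((2*m+3).choose j) = 0 := by
    rw [show 2*(m+2) = (2*m+3)+1 by ring]
    exact Int.alternating_sum_range_choose_of_ne (by omega)
  rw [sum_range_two_mul] at h1 h2
  simp only [neg_one_pow_two_mul, neg_one_pow_two_mul_add_one, one_mul, neg_one_mul] at h2
  have h2' : ((∑ i ∈ Finset.range (m+2), ((2*m+3).choose (2*i) : ℤ))
      = (∑ i ∈ Finset.range (m+2), ((2*m+3).choose (2*i+1) : ℤ))) := by
    rw [Finset.sum_neg_distrib] at h2; linarith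
  push_cast at h2'
  have h2'' : (∑ i ∈ Finset.range (m+2), ((2*m+3).choose (2*i)))
      = (∑ i ∈ Finset.range (m+2), ((2*m+3).choose (2*i+1))) := by exact_mod_cast h2'
  have hp : (2:ℕ)^(2*m+3) = 2^(2*m+2)*2 := pow_succ 2 (2*m+2)
  omega

-- even entries of row 2m+2
private lemma sum_even_choose (m : ℕ) :
    ∑ j ∈ Finset.range (m+2), ((2*m+2).choose (2*j)) = 2^(2*m+1) := by
  have h1 : ∑ j ∈ Finset.range (2*(m+1)+1), ((2*m+2).choose j) = 2^(2*m+2) := by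
    rw [show 2*(m+1)+1 = (2*m+2)+1 by ring]; exact Nat.sum_range_choose _
  have h2 : ∑ j ∈ Finset.range (2*(m+1)+1), ((-1:ℤ))^j * ((2*m+2).choose j) = 0 := by
    rw [show 2*(m+1)+1 = (2*m+2)+1 by ring]
    exact Int.alternating_sum_range_choose_of_ne (by omega)
  rw [Finset.sum_range_succ, sum_range_two_mul] at h1 h2
  simp only [neg_one_pow_two_mul, neg_one_pow_two_mul_add_one, one_mul, neg_one_mul] at h2
  rw [show 2*(m+1) = 2*m+2 by ring] at h2 h1
  rw [Nat.choose_self] at h1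
  rw [Nat.choose_self] at h2
  have h2' : ((∑ i ∈ Finset.range (m+1), ((2*m+2).choose (2*i) : ℤ)) + 1
      = (∑ i ∈ Finset.range (m+1), ((2*m+2).choose (2*i+1) : ℤ))) := by
    rw [Finset.sum_neg_distrib] at h2; push_cast at h2 ⊢; linarith
  have h2'' : (∑ i ∈ Finset.range (m+1), ((2*m+2).choose (2*i))) + 1
      = (∑ i ∈ Finset.range (m+1), ((2*m+2).choose (2*i+1))) := by exact_mod_cast h2'
  rw [Finset.sum_range_succ, show 2*(m+1) = 2*m+2 by ring, Nat.choose_self]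
  have hp : (2:ℕ)^(2*m+2) = 2^(2*m+1)*2 := pow_succ 2 (2*m+1)
  omega

private lemma sum_weighted (m : ℕ) :
    ∑ j ∈ Finset.range (m+2), (2*(j:ℚ)-1) * (((2*m+3).choose (2*j+1) : ℚ))
      = (2*(m:ℚ)-1) * 2^(2*m+1) := by
  have key : ∀ j ∈ Finset.range (m+2), (2*(j:ℚ)-1) * (((2*m+3).choose (2*j+1) : ℚ))
      = (2*(m:ℚ)+3) * (((2*m+2).choose (2*j) : ℚ)) - 2 * (((2*m+3).choose (2*j+1) : ℚ)) := by
    intro j _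
    have hn := Nat.add_one_mul_choose_eq (2*m+2) (2*j)
    have hn' : (2*m+3) * ((2*m+2).choose (2*j)) = ((2*m+3).choose (2*j+1)) * (2*j+1) := by
      simpa [Nat.succ_eq_add_one] using hn
    have hq : ((2:ℚ)*m+3) * (((2*m+2).choose (2*j) : ℚ))
        = (((2*m+3).choose (2*j+1) : ℚ)) * (2*j+1) := by exact_mod_cast hn'
    linear_combination -hq
  rw [Finset.sum_congr rfl key, Finset.sum_sub_distrib, ← Finset.mul_sum, ← Finset.mul_sum]
  have h1 : (∑ j ∈ Finset.range (m+2), (((2*m+2).choose (2*j) : ℚ))) = 2^(2*m+1) := by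
    exact_mod_cast congrArg (Nat.cast : ℕ → ℚ) (sum_even_choose m)
  have h2 : (∑ j ∈ Finset.range (m+2), (((2*m+3).choose (2*j+1) : ℚ))) = 2^(2*m+2) := by
    exact_mod_cast congrArg (Nat.cast : ℕ → ℚ) (sum_odd_choose m)
  rw [h1, h2]
  ring

private lemma key_identity (a d : ℕ) :
    ((a+d+1).factorial : ℚ) * Dq (a+d+2)
      = (2*(a:ℚ)+1) * (2*(a:ℚ)+3) * (((2*(a+d)+3).choose (2*a+3) : ℚ))
        * ((a+1).factorial : ℚ) * (d.factorial : ℚ) * Dq a * Dq d := by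
  rw [Dq_eq, Dq_eq, Dq_eq,
    Nat.cast_choose ℚ (show 2*a+3 ≤ 2*(a+d)+3 by omega),
    show (2*(a+d)+3) - (2*a+3) = 2*d from by omega]
  have f1 : (2*(a+d+2)).factorial = (2*(a+d)+4) * (2*(a+d)+3).factorial := by
    rw [show 2*(a+d+2) = (2*(a+d)+3)+1 by ring, Nat.factorial_succ]
  have f2 : (a+d+2).factorial = (a+d+2) * (a+d+1).factorial := by
    rw [show a+d+2 = (a+d+1)+1 from rfl, Nat.factorial_succ]
  have f3 : (2*a+3).factorial = ((2*a+3)*((2*a+2)*(2*a+1))) * (2*a).factorial := by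
    rw [show 2*a+3 = ((2*a)+1+1)+1 from rfl, Nat.factorial_succ, Nat.factorial_succ,
      Nat.factorial_succ]
    ring
  have f4 : (a+1).factorial = (a+1) * a.factorial := Nat.factorial_succ a
  rw [f1, f2, f3, f4]
  have h1 : ((a+d+1).factorial : ℚ) ≠ 0 := Nat.cast_ne_zero.mpr (Nat.factorial_ne_zero _)
  have h2 : ((2*(a+d)+3).factorial : ℚ) ≠ 0 := Nat.cast_ne_zero.mpr (Nat.factorial_ne_zero _)
  have h3 : ((2*a).factorial : ℚ) ≠ 0 := Nat.cast_ne_zero.mpr (Nat.factorial_ne_zero _)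
  have h4 : ((2*d).factorial : ℚ) ≠ 0 := Nat.cast_ne_zero.mpr (Nat.factorial_ne_zero _)
  have h5 : (a.factorial : ℚ) ≠ 0 := Nat.cast_ne_zero.mpr (Nat.factorial_ne_zero _)
  have h6 : (d.factorial : ℚ) ≠ 0 := Nat.cast_ne_zero.mpr (Nat.factorial_ne_zero _)
  push_cast
  field_simp
  ring

private lemma prod_neg_distrib {s : Finset ℕ} (f : ℕ → ℚ) :
    ∏ t ∈ s, (-(f t)) = (-1)^(s.card) * ∏ t ∈ s, f t := by
  have : ∀ t ∈ s, -(f t) = (-1) * f t := fun t _ => by ring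
  rw [Finset.prod_congr rfl this, Finset.prod_mul_distrib, Finset.prod_const]

-- ∏_{i<n} (i+2) = (n+1)!
private lemma prod_add_two (n : ℕ) :
    ∏ t ∈ Finset.range n, ((t:ℚ) + 2) = (Nat.factorial (n+1) : ℚ) := by
  have h := prod_nat_cast_fact (n+1)
  rw [Finset.prod_range_succ'] at h
  push_cast at h
  rw [← h]
  have h2 : ∀ t ∈ Finset.range n, ((t:ℚ) + 2) = ((t:ℚ) + 1 + 1) := fun t _ => by ring
  rw [Finset.prod_congr rfl h2]
  ring

-- ∏_{i<n} (i+3/2) = Dq (n+1) / 2^n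
private lemma prod_add_three_half (n : ℕ) :
    ∏ t ∈ Finset.range n, ((t:ℚ) + 3/2) = Dq (n+1) / 2^n := by
  have h := prod_half (n+1)
  rw [Finset.prod_range_succ'] at h
  push_cast at h
  have h2 : ∀ t ∈ Finset.range n, ((t:ℚ) + 1 + 1/2) = ((t:ℚ) + 3/2) := fun t _ => by ring
  rw [Finset.prod_congr rfl h2] at h
  rw [pow_succ] at h
  field_simp at h ⊢
  have e : ∀ x ∈ Finset.range n, ((x:ℚ)*2+3)/2 = (2*x+3)/2 := fun x _ => by ring
  rw [Finset.prod_congr rfl e] at h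
  linarith [h]

-- ∏_{t<j} (t - j) = (-1)^j j!
private lemma prod_sub_self (j : ℕ) :
    ∏ t ∈ Finset.range j, ((t:ℚ) - j) = (-1)^j * (Nat.factorial j : ℚ) := by
  rw [← Finset.prod_range_reflect (fun t => ((t:ℚ) - j)) j]
  have h2 : ∀ t ∈ Finset.range j, ((j - 1 - t : ℕ):ℚ) - j = -(((t:ℚ)+1)) := by
    intro t ht
    rw [Finset.mem_range] at ht
    have : ((j - 1 - t : ℕ):ℚ) = (j:ℚ) - 1 - t := by
      push_cast [Nat.cast_sub (by omega : t ≤ j - 1), Nat.cast_sub (by omega : 1 ≤ j)]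
      ring
    rw [this]; ring
  rw [Finset.prod_congr rfl h2, prod_neg_distrib, Finset.card_range, prod_nat_cast_fact]

-- ∏_{i<a} (i + 1/2 - a) = (-1)^a * Dq a / 2^a
private lemma prod_half_sub_self (a : ℕ) :
    ∏ t ∈ Finset.range a, ((t:ℚ) + 1/2 - a) = (-1)^a * Dq a / 2^a := by
  rw [← Finset.prod_range_reflect (fun t => ((t:ℚ) + 1/2 - a)) a]
  have h2 : ∀ t ∈ Finset.range a, ((a - 1 - t : ℕ):ℚ) + 1/2 - a = -(((t:ℚ)+1/2)) := by
    intro t ht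
    rw [Finset.mem_range] at ht
    have : ((a - 1 - t : ℕ):ℚ) = (a:ℚ) - 1 - t := by
      push_cast [Nat.cast_sub (by omega : t ≤ a - 1), Nat.cast_sub (by omega : 1 ≤ a)]
      ring
    rw [this]; ring
  rw [Finset.prod_congr rfl h2, prod_neg_distrib, Finset.card_range, prod_half]
  ring

-- ∏_{i<a+b} (i + 1/2 - a) = (-1)^a Dq a Dq b / 2^(a+b)
private lemma prod_half_sub (a b : ℕ) :
    ∏ t ∈ Finset.range (a+b), ((t:ℚ) + 1/2 - a)
      = (-1)^a * Dq a * Dq b / 2^(a+b) := by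
  rw [← Finset.prod_range_mul_prod_Ico _ (by omega : a ≤ a + b),
    prod_half_sub_self, Finset.prod_Ico_eq_prod_range,
    show a + b - a = b from by omega]
  have h2 : ∀ t ∈ Finset.range b, ((a + t : ℕ):ℚ) + 1/2 - a = ((t:ℚ)+1/2) := by
    intro t _; push_cast; ring
  rw [Finset.prod_congr rfl h2, prod_half]
  rw [pow_add]; ring

private def vv (k : ℕ) (j : ℕ) : ℚ := if j ≤ k then 1/2 - (j:ℚ) else (k:ℚ) - j

private lemma vv_inj (k : ℕ) : Function.Injective (vv k) := by
  intro j1 j2 h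
  unfold vv at h
  by_cases h1 : j1 ≤ k <;> by_cases h2 : j2 ≤ k <;> simp [h1, h2] at h
  · exact_mod_cast h
  · have hq : (1:ℚ) + 2*j2 = 2*k + 2*j1 := by linarith
    have : ((1 + 2*j2 : ℕ) : ℚ) = ((2*k + 2*j1 : ℕ) : ℚ) := by push_cast; linarith
    have := Nat.cast_injective this
    omega
  · have hq : (1:ℚ) + 2*j1 = 2*k + 2*j2 := by linarith
    have : ((1 + 2*j1 : ℕ) : ℚ) = ((2*k + 2*j2 : ℕ) : ℚ) := by push_cast; linarith
    have := Nat.cast_injective this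
    omega
  · exact h

private lemma eval_eq_sum (k : ℕ) (hk : 1 ≤ k) (p : Polynomial ℚ) (hdeg : p.natDegree ≤ 2*k-1) :
    p.eval 1 = ∑ j ∈ Finset.range (2*k), p.eval (vv k j) *
      ∏ t ∈ (Finset.range (2*k)).erase j, ((vv k j - vv k t)⁻¹ * (1 - vv k t)) := by
  have hinj : Set.InjOn (vv k) (Finset.range (2*k)) := (vv_inj k).injOn
  have hdeg' : p.degree < ((Finset.range (2*k)).card : ℕ) := by
    rw [Finset.card_range]
    calc p.degree ≤ (p.natDegree : WithBot ℕ) := Polynomial.degree_le_natDegree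
    _ < ((2*k : ℕ) : WithBot ℕ) := by exact_mod_cast (by omega : p.natDegree < 2*k)
  have hp := Lagrange.eq_interpolate hinj hdeg'
  conv_lhs => rw [hp]
  rw [Lagrange.interpolate_apply, Polynomial.eval_finset_sum]
  refine Finset.sum_congr rfl fun j hj => ?_
  rw [Polynomial.eval_mul, Polynomial.eval_C, Lagrange.basis, Polynomial.eval_prod]
  refine congrArg _ (Finset.prod_congr rfl fun t ht => ?_)
  simp [Lagrange.basisDivisor]

-- ∏_{t∈(range(m+2)).erase j} (t - j) = (-1)^j j! (m+1-j)!
private lemma X1prod (m j : ℕ) (hj : j ≤ m+1) :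
    ∏ t ∈ (Finset.range (m+2)).erase j, ((t:ℚ) - j)
      = (-1)^j * (Nat.factorial j : ℚ) * (Nat.factorial (m+1-j) : ℚ) := by
  have hsplit : (Finset.range (m+2)).erase j
      = Finset.range j ∪ Finset.Ico (j+1) (m+2) := by
    ext t
    simp only [Finset.mem_erase, Finset.mem_range, Finset.mem_union, Finset.mem_Ico]
    omega
  have hdisj : Disjoint (Finset.range j) (Finset.Ico (j+1) (m+2)) := by
    simp only [Finset.disjoint_left, Finset.mem_range, Finset.mem_Ico]
    omega
  rw [hsplit, Finset.prod_union hdisj, prod_sub_self, Finset.prod_Ico_eq_prod_range]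
  have h2 : ∀ t ∈ Finset.range (m+2-(j+1)), ((j+1+t : ℕ):ℚ) - j = ((t:ℚ)+1) := by
    intro t _; push_cast; ring
  rw [Finset.prod_congr rfl h2, prod_nat_cast_fact, show m+2-(j+1) = m+1-j from by omega]

private lemma X2prod (m j : ℕ) (hj : j ≤ m+1) :
    ∏ t ∈ (Finset.range (m+2)).erase j, ((t:ℚ) + 1/2)
      = (Dq (m+2) / 2^(m+2)) / ((j:ℚ) + 1/2) := by
  have hmem : j ∈ Finset.range (m+2) := Finset.mem_range.mpr (by omega)
  have := Finset.prod_erase_mul (Finset.range (m+2)) (fun t => ((t:ℚ) + 1/2)) hmem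
  rw [prod_half] at this
  rw [eq_div_iff (by positivity : ((j:ℚ) + 1/2) ≠ 0)]
  exact this

-- the main per-term value
private lemma Lval (m j : ℕ) (hj : j ≤ m+1) :
    ∏ t ∈ (Finset.range (2*(m+1))).erase j,
        ((vv (m+1) j - vv (m+1) t)⁻¹ * (1 - vv (m+1) t))
      = -(2*(j:ℚ)-1) * (((2*m+3).choose (2*j+1) : ℚ)) / 2 := by
  have hvj : vv (m+1) j = 1/2 - (j:ℚ) := by simp [vv, hj]
  have hsplit : (Finset.range (2*(m+1))).erase j
      = (Finset.range (m+2)).erase j ∪ Finset.Ico (m+2) (2*(m+1)) := by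
    ext t
    simp only [Finset.mem_erase, Finset.mem_range, Finset.mem_union, Finset.mem_Ico]
    omega
  have hdisj : Disjoint ((Finset.range (m+2)).erase j) (Finset.Ico (m+2) (2*(m+1))) := by
    simp only [Finset.disjoint_left, Finset.mem_erase, Finset.mem_range, Finset.mem_Ico]
    omega
  rw [hsplit, Finset.prod_union hdisj]
  -- X part
  have hX : ∀ t ∈ (Finset.range (m+2)).erase j,
      (vv (m+1) j - vv (m+1) t)⁻¹ * (1 - vv (m+1) t)
        = ((t:ℚ) - j)⁻¹ * ((t:ℚ) + 1/2) := by
    intro t ht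
    rw [Finset.mem_erase, Finset.mem_range] at ht
    have hvt : vv (m+1) t = 1/2 - (t:ℚ) := by simp [vv, show t ≤ m+1 from by omega]
    rw [hvj, hvt]
    congr 1
    · congr 1; ring
    · ring
  -- Y part
  have hY : ∀ t ∈ Finset.Ico (m+2) (2*(m+1)),
      (vv (m+1) j - vv (m+1) t)⁻¹ * (1 - vv (m+1) t)
        = (((t:ℚ) - (m+1)) + 1/2 - j)⁻¹ * (((t:ℚ) - (m+1)) + 1) := by
    intro t ht
    rw [Finset.mem_Ico] at ht
    have hvt : vv (m+1) t = ((m+1 : ℕ):ℚ) - t := by simp [vv, show ¬(t ≤ m+1) from by omega]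
    rw [hvj, hvt]
    push_cast
    congr 1
    · congr 1; ring
    · ring
  rw [Finset.prod_congr rfl hX, Finset.prod_congr rfl hY]
  rw [Finset.prod_mul_distrib, Finset.prod_mul_distrib,
    Finset.prod_inv_distrib, Finset.prod_inv_distrib]
  rw [X1prod m j hj, X2prod m j hj]
  rw [Finset.prod_Ico_eq_prod_range, Finset.prod_Ico_eq_prod_range,
    show 2*(m+1) - (m+2) = m from by omega]
  have hY1 : ∀ t ∈ Finset.range m,
      (((m+2+t : ℕ):ℚ) - (m+1)) + 1/2 - j = ((t:ℚ) + 3/2 - j) := by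
    intro t _; push_cast; ring
  have hY2 : ∀ t ∈ Finset.range m,
      (((m+2+t : ℕ):ℚ) - (m+1)) + 1 = ((t:ℚ) + 2) := by
    intro t _; push_cast; ring
  rw [Finset.prod_congr rfl hY1, Finset.prod_congr rfl hY2, prod_add_two]
  -- now case split on j
  rcases Nat.eq_zero_or_pos j with hj0 | hjpos
  · subst hj0
    have : ∀ t ∈ Finset.range m, ((t:ℚ) + 3/2 - (0:ℕ)) = ((t:ℚ) + 3/2) := by
      intro t _; push_cast; ring
    rw [Finset.prod_congr rfl this, prod_add_three_half]
    rw [Nat.choose_one_right]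
    simp only [Nat.cast_zero, Nat.factorial_zero, Nat.sub_zero, pow_zero]
    rw [Dq_succ (m+1)]
    push_cast
    have h1 : ((m+1).factorial : ℚ) ≠ 0 := Nat.cast_ne_zero.mpr (Nat.factorial_ne_zero _)
    have h2 : Dq (m+1) ≠ 0 := Dq_ne _
    field_simp
    ring
  · obtain ⟨a, rfl⟩ : ∃ a, j = a + 1 := ⟨j - 1, by omega⟩
    obtain ⟨b, rfl⟩ : ∃ b, m = a + b := ⟨m - a, by omega⟩
    have hprod : ∀ t ∈ Finset.range (a+b), ((t:ℚ) + 3/2 - ((a+1 : ℕ):ℚ)) = ((t:ℚ) + 1/2 - a) := by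
      intro t _; push_cast; ring
    rw [Finset.prod_congr rfl hprod, prod_half_sub]
    rw [show a+b+1-(a+1) = b from by omega]
    have hK := key_identity a b
    have h1 : ((a+1).factorial : ℚ) ≠ 0 := Nat.cast_ne_zero.mpr (Nat.factorial_ne_zero _)
    have h2 : (b.factorial : ℚ) ≠ 0 := Nat.cast_ne_zero.mpr (Nat.factorial_ne_zero _)
    have h3 : Dq a ≠ 0 := Dq_ne _
    have h4 : Dq b ≠ 0 := Dq_ne _
    have hden : ((2*(a:ℚ)+1) * (2*(a:ℚ)+3) * (((a+1).factorial : ℚ)) * ((b.factorial:ℚ))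
        * Dq a * Dq b) ≠ 0 := by
      repeat' apply mul_ne_zero
      all_goals first | positivity | exact h3 | exact h4 | exact h1 | exact h2
    rw [show 2*(a+1)+1 = 2*a+3 from by omega]
    have h8 : ((a:ℚ) + 1 + 1/2) ≠ 0 := by positivity
    rcases Nat.even_or_odd a with hpar | hpar
    · rw [(hpar.neg_one_pow : ((-1:ℚ))^a = 1),
        ((hpar.add_one).neg_one_pow : ((-1:ℚ))^(a+1) = -1)]
      field_simp
      push_cast
      linear_combination (-4) * (2:ℚ)^a * (2:ℚ)^b * hK
    · rw [(hpar.neg_one_pow : ((-1:ℚ))^a = -1),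
        ((hpar.add_one).neg_one_pow : ((-1:ℚ))^(a+1) = 1)]
      field_simp
      push_cast
      linear_combination (-4) * (2:ℚ)^a * (2:ℚ)^b * hK

private lemma ascPochhammer_half (n : ℕ) :
    (ascPochhammer ℚ n).eval (1/2 : ℚ) = Dq n / 2^n := by
  induction n with
  | zero => simp [Dq]
  | succ n ih =>
    rw [ascPochhammer_succ_eval, ih, Dq_succ, pow_succ]
    have := Dq_ne n
    field_simp
    ring_nf

-- the Icc product
private lemma icc_prod (m : ℕ) :
    ∏ i ∈ Finset.Icc 1 (m+1), ((((m:ℚ)+2) - (i:ℚ)) / (2 * ((m:ℚ)+2) - 2*(i:ℚ) - 1))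
      = ((m+1).factorial : ℚ) / Dq (m+1) := by
  have key : ∀ n : ℕ, ∏ i ∈ Finset.range n, (((i:ℚ)+1) / (2*(i:ℚ)+1))
      = (n.factorial : ℚ) / Dq n := by
    intro n
    rw [Finset.prod_div_distrib]
    have h2 : ∀ t ∈ Finset.range n, ((t:ℚ) + 1) = ((t:ℚ) + 1) := fun _ _ => rfl
    rw [prod_nat_cast_fact]
    rfl
  rw [← Finset.Ico_add_one_right_eq_Icc, Finset.prod_Ico_eq_prod_range,
    show m+1+1-1 = m+1 from by omega]
  rw [← Finset.prod_range_reflect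
    (fun i => ((((m:ℚ)+2) - ((1+i : ℕ):ℚ)) / (2 * ((m:ℚ)+2) - 2*((1+i:ℕ):ℚ) - 1))) (m+1)]
  rw [← key (m+1)]
  refine Finset.prod_congr rfl fun i hi => ?_
  rw [Finset.mem_range] at hi
  rw [show (1 + (m+1-1-i)) = (m + 1 - i) from by omega]
  have hc2 : ((m + 1 - i : ℕ):ℚ) = (m:ℚ) + 1 - i := by
    push_cast [Nat.cast_sub (by omega : i ≤ m + 1)]; ring
  rw [hc2]
  congr 1 <;> ring

private lemma eval_one_of_rCond (m : ℕ) (p : Polynomial ℚ) (h : rCond (m+1) p) :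
    p.eval 1 = (-1)^m * (1 - 2*(m:ℚ)) * Dq m / (m.factorial : ℚ) := by
  obtain ⟨hdeg, hzero, hval⟩ := h
  set c : ℚ := (-2 : ℚ) ^ (-(((m+1 : ℕ) : ℤ) - 1)) * (ascPochhammer ℚ ((m+1) - 1)).eval (1 / 2)
      / (((m+1) - 1).factorial : ℚ) with hc
  have hcval : c = (-1)^m * Dq m / (4^m * (m.factorial : ℚ)) := by
    rw [hc, show (m+1) - 1 = m from rfl, ascPochhammer_half,
      show (-(((m+1 : ℕ) : ℤ) - 1)) = -(m:ℤ) from by push_cast; ring,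
      zpow_neg, zpow_natCast,
      show (-2:ℚ)^m = (-1)^m * 2^m from by rw [← neg_one_mul, mul_pow]]
    rcases Nat.even_or_odd m with hpar | hpar
    · rw [(hpar.neg_one_pow : ((-1:ℚ))^m = 1)]
      have h2 : ((2:ℚ)^m) ≠ 0 := by positivity
      have h3 : ((4:ℚ)^m) ≠ 0 := by positivity
      have h4 : (m.factorial : ℚ) ≠ 0 := Nat.cast_ne_zero.mpr (Nat.factorial_ne_zero _)
      field_simp
      rw [show (4:ℚ)^m = ((2:ℚ)^m)^2 from (by rw [← pow_mul, mul_comm, pow_mul]; norm_num)]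
      ring
    · rw [(hpar.neg_one_pow : ((-1:ℚ))^m = -1)]
      have h2 : ((2:ℚ)^m) ≠ 0 := by positivity
      have h4 : (m.factorial : ℚ) ≠ 0 := Nat.cast_ne_zero.mpr (Nat.factorial_ne_zero _)
      field_simp
      rw [show (4:ℚ)^m = ((2:ℚ)^m)^2 from (by rw [← pow_mul, mul_comm, pow_mul]; norm_num)]
      ring
  have hp1 := eval_eq_sum (m+1) (by omega) p hdeg
  rw [← Finset.sum_range_add_sum_Ico _ (show m+2 ≤ 2*(m+1) from by omega)] at hp1
  have hz : ∑ j ∈ Finset.Ico (m+2) (2*(m+1)), p.eval (vv (m+1) j) *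
      ∏ t ∈ (Finset.range (2*(m+1))).erase j, ((vv (m+1) j - vv (m+1) t)⁻¹ * (1 - vv (m+1) t))
      = 0 := by
    refine Finset.sum_eq_zero fun j hj => ?_
    rw [Finset.mem_Ico] at hj
    have hv : vv (m+1) j = -(((j - (m+1) : ℕ)):ℚ) := by
      simp only [vv, if_neg (by omega : ¬ j ≤ m+1)]
      push_cast [Nat.cast_sub (by omega : m+1 ≤ j)]
      ring
    rw [hv, hzero (j - (m+1)) (by omega) (by omega), zero_mul]
  rw [hz, add_zero] at hp1
  have hterm : ∀ j ∈ Finset.range (m+2), p.eval (vv (m+1) j) *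
      ∏ t ∈ (Finset.range (2*(m+1))).erase j, ((vv (m+1) j - vv (m+1) t)⁻¹ * (1 - vv (m+1) t))
      = c * (-1/2) * ((2*(j:ℚ)-1) * (((2*m+3).choose (2*j+1) : ℚ))) := by
    intro j hj
    rw [Finset.mem_range] at hj
    have hv : vv (m+1) j = 1/2 - (j:ℚ) := by simp [vv, show j ≤ m+1 from by omega]
    rw [Lval m j (by omega), hv, hval j (by omega)]
    ring
  rw [Finset.sum_congr rfl hterm, ← Finset.mul_sum, sum_weighted] at hp1
  rw [hp1, hcval]
  have h4 : ((4:ℚ)^m) ≠ 0 := by positivity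
  have hf : (m.factorial : ℚ) ≠ 0 := Nat.cast_ne_zero.mpr (Nat.factorial_ne_zero _)
  have hpow : (2:ℚ)^(2*m+1) = 2 * 4^m := by
    rw [pow_succ']  -- 2^(2m+1) = 2 * 2^(2m)?
    rw [pow_mul]
    norm_num
  rw [hpow]
  field_simp
  ring

/-- For every integer `N ≥ 2`:
(i) `a_{(1)}^{(N)} = (N−1)/(2N−3)`, and
(ii) `a_{(N−1)}^{(N)} = (−1)^{N−1}·((N−1)/(2N−3))·(2N−5)`. -/
theorem a_coeff_extreme_values (N : ℕ) (hN : 2 ≤ N) :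
    (∀ p : Polynomial ℚ, rCond 1 p → aCoeff 1 N p = ((N : ℚ) - 1) / (2 * (N : ℚ) - 3)) ∧
    (∀ p : Polynomial ℚ, rCond (N - 1) p →
      aCoeff (N - 1) N p
        = (-1 : ℚ) ^ (N - 1) * (((N : ℚ) - 1) / (2 * (N : ℚ) - 3)) * (2 * (N : ℚ) - 5)) := by
  constructor
  · intro p hp
    obtain ⟨hdeg, _, hval⟩ := hp
    have h0 := hval 0 (by omega)
    have h1 := hval 1 (by omega)
    simp [ascPochhammer_zero] at h0 h1
    have hp1 : p = C (p.coeff 1) * X + C (p.coeff 0) :=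
      eq_X_add_C_of_natDegree_le_one (by simpa using hdeg)
    rw [hp1] at h0 h1
    simp [Polynomial.eval_add, Polynomial.eval_mul] at h0 h1
    have hc1 : p.coeff 1 = 0 := by linarith
    have hc0 : p.coeff 0 = 1 := by linarith
    unfold aCoeff
    rw [Finset.Icc_self (1:ℕ), Finset.prod_singleton, hp1, hc1, hc0]
    simp
    congr 1
    ring
  · intro p hp
    obtain ⟨m, rfl⟩ : ∃ m, N = m + 2 := ⟨N - 2, by omega⟩
    have hk : m + 2 - 1 = m + 1 := rfl
    rw [hk] at hp ⊢
    unfold aCoeff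
    have hcast : ((m+2 : ℕ) : ℚ) = (m:ℚ) + 2 := by push_cast; ring
    have hcast2 : ((m+1 : ℕ) : ℚ) = (m:ℚ) + 1 := by push_cast; ring
    rw [hcast, hcast2]
    rw [show (m:ℚ) + 2 - ((m:ℚ)+1) = 1 from by ring]
    rw [icc_prod, eval_one_of_rCond m p hp]
    have h1 : (m.factorial : ℚ) ≠ 0 := Nat.cast_ne_zero.mpr (Nat.factorial_ne_zero _)
    have h2 : Dq (m+1) ≠ 0 := Dq_ne _
    have h3 : Dq m ≠ 0 := Dq_ne _
    have h4 : (2*(m:ℚ)+1) ≠ 0 := by positivity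
    have h5 : 2*((m:ℚ)+2) - 3 ≠ 0 := by
      intro hcon; have : (m:ℚ) = -1/2 := by linarith
      have : (0:ℚ) ≤ (m:ℚ) := Nat.cast_nonneg m
      linarith
    rw [Dq_succ, Nat.factorial_succ]
    push_cast
    field_simp
    ring
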